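/- Let φ ∈ L_S and let ⋁_{i=1}^k φ_i be the DNF of φ. Then φ is prime in L_S if and only if φ entails φ_j for some 1 ≤ j ≤ k. -/
import Mathlib


/-- Finite, loop-free CCS processes over the action set `Act`:
`p ::= 0 | a.p | p + p`. -/
inductive Proc (Act : Type) : Type
  | nil : Proc Act
  | pre : Act → Proc Act → Proc Act
  | plus : Proc Act → Proc Act → Proc Act

/-- The transition relation: `a.p —a→ p`, and `p₁ + p₂ —a→ p'` iff
`p₁ —a→ p'` or `p₂ —a→ p'`. -/
inductive Step {Act : Type} : Proc Act → Act → Proc Act → Prop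
  | pre (a : Act) (p : Proc Act) : Step (Proc.pre a p) a p
  | plusL : ∀ {p₁ p₂ p' : Proc Act} {a : Act},
      Step p₁ a p' → Step (Proc.plus p₁ p₂) a p'
  | plusR : ∀ {p₁ p₂ p' : Proc Act} {a : Act},
      Step p₂ a p' → Step (Proc.plus p₁ p₂) a p'

/-- HML formulas in negation normal form:
`φ ::= tt | ff | φ∧φ | φ∨φ | ⟨a⟩φ | [a]φ`. -/
inductive HML (Act : Type) : Type
  | tt : HML Act
  | ff : HML Act
  | conj : HML Act → HML Act → HML Act
  | disj : HML Act → HML Act → HML Act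
  | dia : Act → HML Act → HML Act
  | box : Act → HML Act → HML Act

/-- The satisfaction relation `p ⊨ φ`. -/
def Sat {Act : Type} : Proc Act → HML Act → Prop
  | _, HML.tt => True
  | _, HML.ff => False
  | p, HML.conj φ ψ => Sat p φ ∧ Sat p ψ
  | p, HML.disj φ ψ => Sat p φ ∨ Sat p ψ
  | p, HML.dia a φ => ∃ p', Step p a p' ∧ Sat p' φ
  | p, HML.box a φ => ∀ p', Step p a p' → Sat p' φ

/-- `φ` entails `ψ` iff every process satisfying `φ` satisfies `ψ`. -/
def Entails {Act : Type} (φ ψ : HML Act) : Prop :=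
  ∀ p : Proc Act, Sat p φ → Sat p ψ

/-- `R` is a simulation relation. -/
def IsSimulation {Act : Type} (R : Proc Act → Proc Act → Prop) : Prop :=
  ∀ p q, R p q → ∀ a p', Step p a p' → ∃ q', Step q a q' ∧ R p' q'

/-- The simulation preorder `≲_S`: the largest simulation. -/
def Sim {Act : Type} (p q : Proc Act) : Prop :=
  ∃ R, IsSimulation R ∧ R p q

/-- The set `I(p)` of initial actions of a process. -/
def initials {Act : Type} (p : Proc Act) : Set Act :=
  {a | ∃ p', Step p a p'}

/-- The fragment `L_S`: `φ ::= tt | ff | φ∧φ | φ∨φ | ⟨a⟩φ`. -/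
inductive InLS {Act : Type} : HML Act → Prop
  | tt : InLS HML.tt
  | ff : InLS HML.ff
  | conj : ∀ {φ ψ : HML Act}, InLS φ → InLS ψ → InLS (HML.conj φ ψ)
  | disj : ∀ {φ ψ : HML Act}, InLS φ → InLS ψ → InLS (HML.disj φ ψ)
  | dia : ∀ {a : Act} {φ : HML Act}, InLS φ → InLS (HML.dia a φ)

/-- The list of disjunction-free disjuncts of the disjunctive normal form,
obtained by rewriting `⟨a⟩(ψ₁∨ψ₂)` to `⟨a⟩ψ₁ ∨ ⟨a⟩ψ₂` and distributing
conjunctions over disjunctions. -/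
def dnfList {Act : Type} : HML Act → List (HML Act)
  | HML.tt => [HML.tt]
  | HML.ff => [HML.ff]
  | HML.conj φ ψ =>
      (dnfList φ).foldr (fun f acc => ((dnfList ψ).map (fun g => HML.conj f g)) ++ acc) []
  | HML.disj φ ψ => dnfList φ ++ dnfList ψ
  | HML.dia a φ => (dnfList φ).map (fun f => HML.dia a f)
  | HML.box a φ => [HML.box a φ]

/-- `φ` is prime in the fragment `L`: whenever `φ` entails a disjunction of
`L`-formulas, it entails one of the disjuncts. -/
def PrimeIn {Act : Type} (L : HML Act → Prop) (φ : HML Act) : Prop :=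
  ∀ φ₁ φ₂ : HML Act, L φ₁ → L φ₂ → Entails φ (HML.disj φ₁ φ₂) →
    Entails φ φ₁ ∨ Entails φ φ₂


section Aux
variable {Act : Type}

/-- Disjunction-free formulas. -/
inductive DisjFree : HML Act → Prop
  | tt : DisjFree HML.tt
  | ff : DisjFree HML.ff
  | conj : ∀ {φ ψ}, DisjFree φ → DisjFree ψ → DisjFree (HML.conj φ ψ)
  | dia : ∀ {a φ}, DisjFree φ → DisjFree (HML.dia a φ)
  | box : ∀ {a φ}, DisjFree (HML.box a φ)

lemma mem_foldr_append {α β : Type*} (g : α → List β) (l : List α) (x : β) :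
    x ∈ l.foldr (fun f acc => g f ++ acc) [] ↔ ∃ f ∈ l, x ∈ g f := by
  induction l with
  | nil => simp
  | cons a l ih => simp [ih]

lemma dnf_ne (φ : HML Act) : dnfList φ ≠ [] := by
  induction φ with
  | tt => simp [dnfList]
  | ff => simp [dnfList]
  | conj φ ψ ihφ ihψ =>
    rcases List.exists_mem_of_ne_nil _ ihφ with ⟨f, hf⟩
    rcases List.exists_mem_of_ne_nil _ ihψ with ⟨g, hg⟩
    intro hnil
    have : HML.conj f g ∈ dnfList (HML.conj φ ψ) := by
      simp only [dnfList, mem_foldr_append]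
      exact ⟨f, hf, List.mem_map.mpr ⟨g, hg, rfl⟩⟩
    simp [hnil] at this
  | disj φ ψ ihφ ihψ => simp [dnfList, ihφ]
  | dia a φ ih => simp [dnfList, ih]
  | box a φ ih => simp [dnfList]

lemma sat_dnf (p : Proc Act) (φ : HML Act) :
    Sat p φ ↔ ∃ ψ ∈ dnfList φ, Sat p ψ := by
  induction φ generalizing p with
  | tt => simp [dnfList, Sat]
  | ff => simp [dnfList, Sat]
  | conj φ ψ ihφ ihψ =>
    simp only [dnfList, mem_foldr_append]
    constructor
    · rintro ⟨h1, h2⟩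
      rcases (ihφ p).mp h1 with ⟨f, hf, hsf⟩
      rcases (ihψ p).mp h2 with ⟨g, hg, hsg⟩
      exact ⟨HML.conj f g, ⟨f, hf, List.mem_map.mpr ⟨g, hg, rfl⟩⟩, hsf, hsg⟩
    · rintro ⟨x, ⟨f, hf, hx⟩, hsx⟩
      rcases List.mem_map.mp hx with ⟨g, hg, rfl⟩
      exact ⟨(ihφ p).mpr ⟨f, hf, hsx.1⟩, (ihψ p).mpr ⟨g, hg, hsx.2⟩⟩
  | disj φ ψ ihφ ihψ =>
    simp only [dnfList, List.mem_append]
    constructor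
    · rintro (h | h)
      · rcases (ihφ p).mp h with ⟨f, hf, hs⟩; exact ⟨f, Or.inl hf, hs⟩
      · rcases (ihψ p).mp h with ⟨f, hf, hs⟩; exact ⟨f, Or.inr hf, hs⟩
    · rintro ⟨f, hf | hf, hs⟩
      · exact Or.inl ((ihφ p).mpr ⟨f, hf, hs⟩)
      · exact Or.inr ((ihψ p).mpr ⟨f, hf, hs⟩)
  | dia a φ ih =>
    simp only [dnfList, List.mem_map]
    constructor
    · rintro ⟨p', hstep, hs⟩
      rcases (ih p').mp hs with ⟨f, hf, hsf⟩
      exact ⟨HML.dia a f, ⟨f, hf, rfl⟩, p', hstep, hsf⟩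
    · rintro ⟨x, ⟨f, hf, rfl⟩, p', hstep, hsf⟩
      exact ⟨p', hstep, (ih p').mpr ⟨f, hf, hsf⟩⟩
  | box a φ ih => simp [dnfList]

lemma dnf_inLS {φ ψ : HML Act} (h : InLS φ) (hm : ψ ∈ dnfList φ) : InLS ψ := by
  induction h generalizing ψ with
  | tt => simp [dnfList] at hm; subst hm; exact InLS.tt
  | ff => simp [dnfList] at hm; subst hm; exact InLS.ff
  | conj h1 h2 ih1 ih2 =>
    simp only [dnfList, mem_foldr_append] at hm
    rcases hm with ⟨f, hf, hx⟩
    rcases List.mem_map.mp hx with ⟨g, hg, rfl⟩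
    exact InLS.conj (ih1 hf) (ih2 hg)
  | disj h1 h2 ih1 ih2 =>
    simp only [dnfList, List.mem_append] at hm
    rcases hm with hm | hm
    · exact ih1 hm
    · exact ih2 hm
  | dia h1 ih =>
    rcases List.mem_map.mp hm with ⟨f, hf, rfl⟩
    exact InLS.dia (ih hf)

lemma dnf_disjFree {φ ψ : HML Act} (h : InLS φ) (hm : ψ ∈ dnfList φ) : DisjFree ψ := by
  induction h generalizing ψ with
  | tt => simp [dnfList] at hm; subst hm; exact DisjFree.tt
  | ff => simp [dnfList] at hm; subst hm; exact DisjFree.ff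
  | conj h1 h2 ih1 ih2 =>
    simp only [dnfList, mem_foldr_append] at hm
    rcases hm with ⟨f, hf, hx⟩
    rcases List.mem_map.mp hx with ⟨g, hg, rfl⟩
    exact DisjFree.conj (ih1 hf) (ih2 hg)
  | disj h1 h2 ih1 ih2 =>
    simp only [dnfList, List.mem_append] at hm
    rcases hm with hm | hm
    · exact ih1 hm
    · exact ih2 hm
  | dia h1 ih =>
    rcases List.mem_map.mp hm with ⟨f, hf, rfl⟩
    exact DisjFree.dia (ih hf)

lemma sim_isSim : IsSimulation (Sim (Act := Act)) := by
  rintro p q ⟨R, hR, hpq⟩ a p' hstep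
  rcases hR p q hpq a p' hstep with ⟨q', hq', hR'⟩
  exact ⟨q', hq', R, hR, hR'⟩

lemma sim_refl (p : Proc Act) : Sim p p :=
  ⟨Eq, by rintro x y rfl a x' h; exact ⟨x', h, rfl⟩, rfl⟩

lemma sim_nil (q : Proc Act) : Sim Proc.nil q := by
  refine ⟨fun s _ => s = Proc.nil, ?_, rfl⟩
  rintro s t rfl a s' hstep
  cases hstep

lemma sim_plusL (p q : Proc Act) : Sim p (Proc.plus p q) := by
  refine ⟨fun s t => Sim s t ∨ (s = p ∧ t = Proc.plus p q), ?_, Or.inr ⟨rfl, rfl⟩⟩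
  rintro s t (hs | ⟨rfl, rfl⟩) a s' hstep
  · rcases sim_isSim s t hs a s' hstep with ⟨t', ht', hsim⟩
    exact ⟨t', ht', Or.inl hsim⟩
  · exact ⟨s', Step.plusL hstep, Or.inl (sim_refl s')⟩

lemma sim_plusR (p q : Proc Act) : Sim q (Proc.plus p q) := by
  refine ⟨fun s t => Sim s t ∨ (s = q ∧ t = Proc.plus p q), ?_, Or.inr ⟨rfl, rfl⟩⟩
  rintro s t (hs | ⟨rfl, rfl⟩) a s' hstep
  · rcases sim_isSim s t hs a s' hstep with ⟨t', ht', hsim⟩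
    exact ⟨t', ht', Or.inl hsim⟩
  · exact ⟨s', Step.plusR hstep, Or.inl (sim_refl s')⟩

lemma sim_plus {p q r : Proc Act} (hp : Sim p r) (hq : Sim q r) :
    Sim (Proc.plus p q) r := by
  refine ⟨fun s t => Sim s t ∨ (s = Proc.plus p q ∧ t = r), ?_, Or.inr ⟨rfl, rfl⟩⟩
  rintro s t (hs | ⟨rfl, rfl⟩) a s' hstep
  · rcases sim_isSim s t hs a s' hstep with ⟨t', ht', hsim⟩
    exact ⟨t', ht', Or.inl hsim⟩
  · cases hstep with
    | plusL h =>
      rcases sim_isSim _ _ hp a s' h with ⟨t', ht', hsim⟩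
      exact ⟨t', ht', Or.inl hsim⟩
    | plusR h =>
      rcases sim_isSim _ _ hq a s' h with ⟨t', ht', hsim⟩
      exact ⟨t', ht', Or.inl hsim⟩

lemma sim_pre {p q q' : Proc Act} {a : Act} (hstep : Step q a q') (hsim : Sim p q') :
    Sim (Proc.pre a p) q := by
  refine ⟨fun s t => Sim s t ∨ (s = Proc.pre a p ∧ t = q), ?_, Or.inr ⟨rfl, rfl⟩⟩
  rintro s t (hs | ⟨rfl, rfl⟩) b s' hst
  · rcases sim_isSim s t hs b s' hst with ⟨t', ht', h⟩
    exact ⟨t', ht', Or.inl h⟩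
  · cases hst with
    | pre => exact ⟨q', hstep, Or.inl hsim⟩

lemma sat_of_sim {ψ : HML Act} (h : InLS ψ) :
    ∀ {p q : Proc Act}, Sim p q → Sat p ψ → Sat q ψ := by
  induction h with
  | tt => intro p q _ _; trivial
  | ff => intro p q _ hs; exact hs.elim
  | conj h1 h2 ih1 ih2 => rintro p q hsim ⟨s1, s2⟩; exact ⟨ih1 hsim s1, ih2 hsim s2⟩
  | disj h1 h2 ih1 ih2 =>
    rintro p q hsim (s | s)
    · exact Or.inl (ih1 hsim s)
    · exact Or.inr (ih2 hsim s)
  | dia h1 ih =>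
    rintro p q hsim ⟨p', hstep, hs⟩
    rcases sim_isSim p q hsim _ p' hstep with ⟨q', hq', hsim'⟩
    exact ⟨q', hq', ih hsim' hs⟩

/-- Characteristic process for a satisfiable disjunction-free `L_S` formula. -/
lemma char_exists {ψ : HML Act} (hdf : DisjFree ψ) (hls : InLS ψ) :
    ∀ {p : Proc Act}, Sat p ψ →
      ∃ c : Proc Act, Sat c ψ ∧ ∀ q, Sat q ψ → Sim c q := by
  induction hdf with
  | tt => intro p _; exact ⟨Proc.nil, trivial, fun q _ => sim_nil q⟩
  | ff => intro p hs; exact hs.elim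
  | conj h1 h2 ih1 ih2 =>
    rcases hls with _ | _ | ⟨hl1, hl2⟩ | _ | _
    rintro p ⟨s1, s2⟩
    rcases ih1 hl1 s1 with ⟨c1, hc1, hmin1⟩
    rcases ih2 hl2 s2 with ⟨c2, hc2, hmin2⟩
    refine ⟨Proc.plus c1 c2, ⟨?_, ?_⟩, ?_⟩
    · exact sat_of_sim hl1 (sim_plusL c1 c2) hc1
    · exact sat_of_sim hl2 (sim_plusR c1 c2) hc2
    · rintro q ⟨q1, q2⟩
      exact sim_plus (hmin1 q q1) (hmin2 q q2)
  | @dia a ψ' h1 ih =>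
    rcases hls with _ | _ | _ | _ | ⟨hl⟩
    rintro p ⟨p', hstep, hs⟩
    rcases ih hl hs with ⟨c, hc, hmin⟩
    refine ⟨Proc.pre a c, ⟨c, Step.pre a c, hc⟩, ?_⟩
    rintro q ⟨q', hq', hsq'⟩
    exact sim_pre hq' (hmin q' hsq')
  | box => rcases hls with _ | _ | _ | _ | _

/-- Fold a nonempty list of formulas into a disjunction. -/
def disjOf : List (HML Act) → HML Act
  | [] => HML.ff
  | [ψ] => ψ
  | ψ :: l => HML.disj ψ (disjOf l)

lemma sat_disjOf (p : Proc Act) : ∀ l : List (HML Act),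
    Sat p (disjOf l) ↔ ∃ ψ ∈ l, Sat p ψ := by
  intro l
  induction l with
  | nil => simp [disjOf, Sat]
  | cons a l ih =>
    cases l with
    | nil => simp [disjOf]
    | cons b l' =>
      show Sat p (HML.disj a (disjOf (b :: l'))) ↔ _
      simp only [Sat, ih, List.mem_cons]
      constructor
      · rintro (h | ⟨ψ, hm, hs⟩)
        · exact ⟨a, Or.inl rfl, h⟩
        · exact ⟨ψ, Or.inr hm, hs⟩
      · rintro ⟨ψ, hm | hm, hs⟩
        · exact Or.inl (hm ▸ hs)
        · exact Or.inr ⟨ψ, hm, hs⟩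

lemma inLS_disjOf : ∀ {l : List (HML Act)}, (∀ ψ ∈ l, InLS ψ) → InLS (disjOf l)
  | [], _ => InLS.ff
  | [ψ], h => h ψ (by simp)
  | ψ :: b :: l', h => by
    show InLS (HML.disj ψ (disjOf (b :: l')))
    exact InLS.disj (h ψ (by simp)) (inLS_disjOf (fun x hx => h x (List.mem_cons_of_mem _ hx)))

lemma prime_extract {φ : HML Act} (hp : PrimeIn InLS φ) :
    ∀ l : List (HML Act), l ≠ [] → (∀ ψ ∈ l, InLS ψ) →
      Entails φ (disjOf l) → ∃ ψ ∈ l, Entails φ ψ := by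
  intro l
  induction l with
  | nil => intro h; exact absurd rfl h
  | cons a l ih =>
    intro _ hls hent
    cases l with
    | nil => exact ⟨a, by simp, hent⟩
    | cons b l' =>
      have hla : InLS a := hls a (by simp)
      have hlrest : InLS (disjOf (b :: l')) :=
        inLS_disjOf (fun x hx => hls x (List.mem_cons_of_mem _ hx))
      have : Entails φ (HML.disj a (disjOf (b :: l'))) := hent
      rcases hp a (disjOf (b :: l')) hla hlrest this with h | h
      · exact ⟨a, by simp, h⟩
      · rcases ih (by simp) (fun x hx => hls x (List.mem_cons_of_mem _ hx)) h with ⟨ψ, hm, he⟩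
        exact ⟨ψ, List.mem_cons_of_mem _ hm, he⟩

end Aux

/-- Let `φ ∈ L_S` with DNF `⋁_{i=1}^k φ_i`. Then `φ` is prime in `L_S` iff
`φ` entails `φ_j` for some `1 ≤ j ≤ k`. -/
theorem prime_iff_entails_disjunct_LS {Act : Type} [Fintype Act] [Nonempty Act]
    (φ : HML Act) (h : InLS φ) :
    PrimeIn InLS φ ↔ ∃ ψ ∈ dnfList φ, Entails φ ψ := by
  constructor
  · intro hp
    have hent : Entails φ (disjOf (dnfList φ)) := by
      intro p hs
      rw [sat_disjOf]
      exact (sat_dnf p φ).mp hs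
    exact prime_extract hp (dnfList φ) (dnf_ne φ) (fun ψ hψ => dnf_inLS h hψ) hent
  · rintro ⟨ψ, hmem, hent⟩
    intro φ₁ φ₂ hl1 hl2 hφ12
    by_cases hsat : ∃ p, Sat p ψ
    · rcases hsat with ⟨p, hp⟩
      rcases char_exists (dnf_disjFree h hmem) (dnf_inLS h hmem) hp with ⟨c, hc, hmin⟩
      have hcφ : Sat c φ := (sat_dnf c φ).mpr ⟨ψ, hmem, hc⟩
      rcases hφ12 c hcφ with hc1 | hc2
      · left
        intro q hq
        exact sat_of_sim hl1 (hmin q (hent q hq)) hc1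
      · right
        intro q hq
        exact sat_of_sim hl2 (hmin q (hent q hq)) hc2
    · left
      intro q hq
      exact absurd ⟨q, hent q hq⟩ hsat
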